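/- The point (0,0) is a fixed point of F_η; the Jacobian of F_η at (0,0) equals the 2×2 real matrix [[1, −η(2γ−1) n_e (x_s−x_t)/2], [η(2γ−1) n_d (x_s−x_t)/2, 1 − η²(2γ−1)² n_e n_d (x_s−x_t)²/4]]; setting α = ((2γ−1)η/2)√(n_e n_d)·|x_s − x_t|, its complex eigenvalues are 1 − α²/2 ± √((1 − α²/2)² − 1) with product equal to 1; and both eigenvalues have modulus exactly 1 if and only if η ≤ 4/((2γ−1)√(n_e n_d)·|x_s − x_t|), while some eigenvalue has modulus strictly greater than 1 otherwise. Since 1/(2γ−1) ≥ 1, the admissible learning-rate range is larger than that of unsmoothed alternating gradient descent DANN by the factor 1/(2γ−1). -/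

import Mathlib

open Real

/- Auxiliary definitions and lemmas -/

noncomputable def phi (t : ℝ) : ℝ := Real.exp (-t) / (1 + Real.exp (-t))

lemma phi_pos_denom (t : ℝ) : (1 + Real.exp (-t)) ≠ 0 := by positivity

lemma hasDerivAt_f (t : ℝ) :
    HasDerivAt (fun t => Real.log (1 / (1 + Real.exp (-t)))) (phi t) t := by
  have hfe : (fun t => Real.log (1 / (1 + Real.exp (-t))))
      = fun t => -Real.log (1 + Real.exp (-t)) := by
    funext t; rw [one_div, Real.log_inv]
  rw [hfe]
  have h1 : HasDerivAt (fun t : ℝ => 1 + Real.exp (-t)) (-Real.exp (-t)) t := by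
    have := ((Real.hasDerivAt_exp (-t)).comp t ((hasDerivAt_id t).neg))
    simpa using this.const_add 1
  have := (h1.log (phi_pos_denom t)).neg
  simpa [phi, neg_div, Pi.neg_def] using this

lemma phi_zero : phi 0 = 1/2 := by
  simp [phi]; norm_num

lemma differentiable_phi : Differentiable ℝ phi := by
  have h1 : Differentiable ℝ (fun t : ℝ => 1 + Real.exp (-t)) := by fun_prop
  exact (Real.differentiable_exp.comp differentiable_neg).div h1 phi_pos_denom

noncomputable def Hf (γ xs xt : ℝ) (p : ℝ × ℝ) : ℝ :=
  γ*xs*phi (p.2*p.1*xs) - (1-γ)*xs*phi (-(p.2*p.1*xs))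
    - γ*xt*phi (-(p.2*p.1*xt)) + (1-γ)*xt*phi (p.2*p.1*xt)

lemma Hf_zero (γ xs xt : ℝ) : Hf γ xs xt (0,0) = (2*γ-1)*(xs-xt)/2 := by
  simp [Hf, phi_zero]; ring

noncomputable def dd (γ xs xt : ℝ) (a b : ℝ) : ℝ :=
  γ * Real.log (1 / (1 + Real.exp (-(b*a*xs))))
    + (1 - γ) * Real.log (1 / (1 + Real.exp (-(-(b*a*xs)))))
    + γ * Real.log (1 / (1 + Real.exp (-(-(b*a*xt)))))
    + (1 - γ) * Real.log (1 / (1 + Real.exp (-(b*a*xt))))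

lemma hasDerivAt_dd_fst (γ xs xt a b : ℝ) :
    HasDerivAt (fun a => dd γ xs xt a b) (b * Hf γ xs xt (a, b)) a := by
  have hs : HasDerivAt (fun a => b*a*xs) (b*xs) a := by
    simpa using ((hasDerivAt_id a).const_mul b).mul_const xs
  have ht : HasDerivAt (fun a => b*a*xt) (b*xt) a := by
    simpa using ((hasDerivAt_id a).const_mul b).mul_const xt
  have h1 := ((hasDerivAt_f (b*a*xs)).comp a hs).const_mul γ
  have h2 := ((hasDerivAt_f (-(b*a*xs))).comp a hs.neg).const_mul (1-γ)
  have h3 := ((hasDerivAt_f (-(b*a*xt))).comp a ht.neg).const_mul γ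
  have h4 := ((hasDerivAt_f (b*a*xt)).comp a ht).const_mul (1-γ)
  have := ((h1.add h2).add h3).add h4
  refine this.congr_deriv ?_
  simp [Hf]; ring

lemma hasDerivAt_dd_snd (γ xs xt a b : ℝ) :
    HasDerivAt (fun b => dd γ xs xt a b) (a * Hf γ xs xt (a, b)) b := by
  have hs : HasDerivAt (fun b => b*a*xs) (a*xs) b := by
    have : (fun b : ℝ => b*a*xs) = fun b => b * (a*xs) := by funext b; ring
    rw [this]; simpa using (hasDerivAt_id b).mul_const (a*xs)
  have ht : HasDerivAt (fun b => b*a*xt) (a*xt) b := by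
    have : (fun b : ℝ => b*a*xt) = fun b => b * (a*xt) := by funext b; ring
    rw [this]; simpa using (hasDerivAt_id b).mul_const (a*xt)
  have h1 := ((hasDerivAt_f (b*a*xs)).comp b hs).const_mul γ
  have h2 := ((hasDerivAt_f (-(b*a*xs))).comp b hs.neg).const_mul (1-γ)
  have h3 := ((hasDerivAt_f (-(b*a*xt))).comp b ht.neg).const_mul γ
  have h4 := ((hasDerivAt_f (b*a*xt)).comp b ht).const_mul (1-γ)
  have := ((h1.add h2).add h3).add h4
  refine this.congr_deriv ?_
  simp [Hf]; ring

lemma differentiable_Hf (γ xs xt : ℝ) : Differentiable ℝ (Hf γ xs xt) := by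
  have hp := differentiable_phi
  have hin : ∀ x : ℝ, Differentiable ℝ (fun p : ℝ × ℝ => p.2*p.1*x) := by
    intro x; fun_prop
  have h1 : ∀ x : ℝ, Differentiable ℝ (fun p : ℝ × ℝ => phi (p.2*p.1*x)) :=
    fun x => hp.comp (hin x)
  have h2 : ∀ x : ℝ, Differentiable ℝ (fun p : ℝ × ℝ => phi (-(p.2*p.1*x))) :=
    fun x => hp.comp (hin x).neg
  exact ((((h1 xs).const_mul _).sub ((h2 xs).const_mul _)).sub
    ((h2 xt).const_mul _)).add ((h1 xt).const_mul _)

noncomputable def Mm (a b c d : ℝ) : ℝ × ℝ →L[ℝ] ℝ × ℝ :=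
  (a • ContinuousLinearMap.fst ℝ ℝ ℝ + b • ContinuousLinearMap.snd ℝ ℝ ℝ).prod
    (c • ContinuousLinearMap.fst ℝ ℝ ℝ + d • ContinuousLinearMap.snd ℝ ℝ ℝ)

@[simp] lemma Mm_apply (a b c d : ℝ) (v : ℝ × ℝ) :
    Mm a b c d v = (a*v.1 + b*v.2, c*v.1 + d*v.2) := by
  simp [Mm, smul_eq_mul]

lemma Mm_comp (a b c d a' b' c' d' : ℝ) :
    (Mm a b c d).comp (Mm a' b' c' d')
      = Mm (a*a'+b*c') (a*b'+b*d') (c*a'+d*c') (c*b'+d*d') := by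
  apply ContinuousLinearMap.ext; intro v
  simp [Prod.ext_iff]
  constructor <;> ring

lemma Mm_id : Mm 1 0 0 1 = ContinuousLinearMap.id ℝ (ℝ × ℝ) := by
  apply ContinuousLinearMap.ext; intro v
  simp

lemma hG1 (η γ xs xt : ℝ) :
    HasFDerivAt (fun θ : ℝ × ℝ => (θ.1 - η * (θ.2 * Hf γ xs xt θ), θ.2))
      (Mm 1 (-(η * Hf γ xs xt (0,0))) 0 1) (0,0) := by
  have hH := ((differentiable_Hf γ xs xt) (0,0)).hasFDerivAt
  have hmul := (hasFDerivAt_snd (𝕜 := ℝ) (p := ((0,0) : ℝ × ℝ))).mul hH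
  have h1 := (hasFDerivAt_fst (𝕜 := ℝ) (p := ((0,0) : ℝ × ℝ))).sub (hmul.const_mul η)
  have := h1.prodMk (hasFDerivAt_snd (𝕜 := ℝ) (p := ((0,0) : ℝ × ℝ)))
  refine this.congr_fderiv ?_
  apply ContinuousLinearMap.ext; intro v
  simp [Prod.ext_iff, smul_eq_mul]
  ring

lemma hG2 (η γ xs xt : ℝ) :
    HasFDerivAt (fun θ : ℝ × ℝ => (θ.1, θ.2 + η * (θ.1 * Hf γ xs xt θ)))
      (Mm 1 0 (η * Hf γ xs xt (0,0)) 1) (0,0) := by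
  have hH := ((differentiable_Hf γ xs xt) (0,0)).hasFDerivAt
  have hmul := (hasFDerivAt_fst (𝕜 := ℝ) (p := ((0,0) : ℝ × ℝ))).mul hH
  have h1 := (hasFDerivAt_snd (𝕜 := ℝ) (p := ((0,0) : ℝ × ℝ))).add (hmul.const_mul η)
  have := (hasFDerivAt_fst (𝕜 := ℝ) (p := ((0,0) : ℝ × ℝ))).prodMk h1
  refine this.congr_fderiv ?_
  apply ContinuousLinearMap.ext; intro v
  simp [Prod.ext_iff, smul_eq_mul]
  ring

lemma it1 (G : ℝ × ℝ → ℝ × ℝ) (b : ℝ) (hfix : G (0,0) = (0,0))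
    (hA : HasFDerivAt G (Mm 1 b 0 1) (0,0)) :
    ∀ n : ℕ, HasFDerivAt (G^[n]) (Mm 1 (n*b) 0 1) (0,0) := by
  intro n; induction n with
  | zero => simpa [Mm_id] using hasFDerivAt_id ((0,0) : ℝ × ℝ)
  | succ n ih =>
      rw [Function.iterate_succ']
      have hfixn : G^[n] (0,0) = (0,0) := Function.iterate_fixed hfix n
      have := HasFDerivAt.comp (0,0) (hfixn ▸ hA) ih
      rw [Mm_comp] at this
      refine this.congr_fderiv ?_
      simp only [Nat.cast_succ]; congr 1 <;> ring

lemma it2 (G : ℝ × ℝ → ℝ × ℝ) (c : ℝ) (hfix : G (0,0) = (0,0))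
    (hA : HasFDerivAt G (Mm 1 0 c 1) (0,0)) :
    ∀ n : ℕ, HasFDerivAt (G^[n]) (Mm 1 0 (n*c) 1) (0,0) := by
  intro n; induction n with
  | zero => simpa [Mm_id] using hasFDerivAt_id ((0,0) : ℝ × ℝ)
  | succ n ih =>
      rw [Function.iterate_succ']
      have hfixn : G^[n] (0,0) = (0,0) := Function.iterate_fixed hfix n
      have := HasFDerivAt.comp (0,0) (hfixn ▸ hA) ih
      rw [Mm_comp] at this
      refine this.congr_fderiv ?_
      simp only [Nat.cast_succ]; congr 1 <;> ring

lemma spec_fin2 (A : Matrix (Fin 2) (Fin 2) ℂ) (μ : ℂ) :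
    μ ∈ spectrum ℂ A ↔ (μ - A 0 0) * (μ - A 1 1) - A 0 1 * A 1 0 = 0 := by
  rw [spectrum.mem_iff, Matrix.isUnit_iff_isUnit_det, isUnit_iff_ne_zero, not_not,
    Matrix.det_fin_two]
  simp [Matrix.algebraMap_matrix_apply]

lemma aux1 {a : ℝ} (h : 2 < a) : 1 - a^2/2 < -1 := by nlinarith
lemma aux2 {b : ℝ} (h : b < -1) : 0 < b^2 - 1 := by nlinarith
lemma aux3 {a : ℝ} (h0 : 0 < a) (h : a ≤ 2) : -1 ≤ 1 - a^2/2 := by nlinarith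
lemma aux4 {a : ℝ} (h0 : 0 < a) : 1 - a^2/2 < 1 := by nlinarith
lemma aux5 {b : ℝ} (h1 : -1 ≤ b) (h2 : b < 1) : b^2 - 1 ≤ 0 := by nlinarith
lemma aux6 {b : ℝ} (h2 : b < 1) (h : b^2 = 1) : b = -1 := by nlinarith
lemma aux7 {c s t : ℝ} (hc : c ≤ 1) (hs : 0 ≤ s) (ht : 0 ≤ t) : c*s*t ≤ s*t := by nlinarith [mul_nonneg (sub_nonneg.mpr hc) (mul_nonneg hs ht)]
lemma aux8 {x y : ℝ} (h1 : (1:ℝ) ≤ x) (h2 : (1:ℝ) ≤ y) : (0:ℝ) < x * y := by nlinarith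
/-- For the environment-label-smoothed toy DANN objective
`d_γ(θe,θd) = γ f(θd θe x_s) + (1−γ) f(−θd θe x_s) + γ f(−θd θe x_t) + (1−γ) f(θd θe x_t)`
with γ ∈ (1/2,1], the combined alternating-GD operator fixes (0,0); its Jacobian there is
`[[1, −η(2γ−1) n_e (x_s−x_t)/2], [η(2γ−1) n_d (x_s−x_t)/2, 1 − η²(2γ−1)² n_e n_d (x_s−x_t)²/4]]`;
with `α = ((2γ−1)η/2)√(n_e n_d)|x_s − x_t|` the complex eigenvalues are
`1 − α²/2 ± √((1 − α²/2)² − 1)` with product 1; both have modulus exactly 1 iff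
`η ≤ 4/((2γ−1)√(n_e n_d)|x_s − x_t|)`, otherwise some eigenvalue has modulus > 1; and since
`1/(2γ−1) ≥ 1`, the admissible learning-rate threshold is at least that of the unsmoothed
alternating GD DANN. -/
theorem stmt15 (xs xt : ℝ) (hx : xs ≠ xt) (η : ℝ) (hη : 0 < η)
    (γ : ℝ) (hγ : γ ∈ Set.Ioc (1/2 : ℝ) 1)
    (ne nd : ℕ) (hne : 1 ≤ ne) (hnd : 1 ≤ nd) :
    let f : ℝ → ℝ := fun t => Real.log (1 / (1 + Real.exp (-t)))
    let d : ℝ → ℝ → ℝ := fun θe θd =>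
      γ * f (θd * θe * xs) + (1 - γ) * f (-(θd * θe * xs))
        + γ * f (-(θd * θe * xt)) + (1 - γ) * f (θd * θe * xt)
    let F1 : ℝ × ℝ → ℝ × ℝ := fun θ => (θ.1 - η * deriv (fun a => d a θ.2) θ.1, θ.2)
    let F2 : ℝ × ℝ → ℝ × ℝ := fun θ => (θ.1, θ.2 + η * deriv (fun b => d θ.1 b) θ.2)
    let F : ℝ × ℝ → ℝ × ℝ := (F2^[nd]) ∘ (F1^[ne])
    let J : Matrix (Fin 2) (Fin 2) ℝ :=
      !![1, -(η * (2 * γ - 1) * (ne : ℝ) * (xs - xt) / 2);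
         η * (2 * γ - 1) * (nd : ℝ) * (xs - xt) / 2,
         1 - η ^ 2 * (2 * γ - 1) ^ 2 * (ne : ℝ) * (nd : ℝ) * (xs - xt) ^ 2 / 4]
    let Jc : Matrix (Fin 2) (Fin 2) ℂ := J.map (fun a => (a : ℂ))
    let α : ℝ := (2 * γ - 1) * η / 2 * Real.sqrt ((ne : ℝ) * (nd : ℝ)) * |xs - xt|
    F (0, 0) = (0, 0) ∧
    (∀ v : ℝ × ℝ, fderiv ℝ F (0, 0) v
        = (J 0 0 * v.1 + J 0 1 * v.2, J 1 0 * v.1 + J 1 1 * v.2)) ∧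
    (∃ w : ℂ, w ^ 2 = ((1 - α ^ 2 / 2 : ℝ) : ℂ) ^ 2 - 1 ∧
      spectrum ℂ Jc = {((1 - α ^ 2 / 2 : ℝ) : ℂ) + w, ((1 - α ^ 2 / 2 : ℝ) : ℂ) - w} ∧
      (((1 - α ^ 2 / 2 : ℝ) : ℂ) + w) * (((1 - α ^ 2 / 2 : ℝ) : ℂ) - w) = 1) ∧
    ((∀ μ ∈ spectrum ℂ Jc, ‖μ‖ = 1) ↔
        η ≤ 4 / ((2 * γ - 1) * Real.sqrt ((ne : ℝ) * (nd : ℝ)) * |xs - xt|)) ∧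
    (¬ η ≤ 4 / ((2 * γ - 1) * Real.sqrt ((ne : ℝ) * (nd : ℝ)) * |xs - xt|) →
        ∃ μ ∈ spectrum ℂ Jc, 1 < ‖μ‖) ∧
    4 / (Real.sqrt ((ne : ℝ) * (nd : ℝ)) * |xs - xt|)
      ≤ 4 / ((2 * γ - 1) * Real.sqrt ((ne : ℝ) * (nd : ℝ)) * |xs - xt|) := by
  intro f d F1 F2 F J Jc α
  have h2γ1 : 0 < 2*γ - 1 := by linarith [hγ.1]
  have h2γle : 2*γ - 1 ≤ 1 := by linarith [hγ.2]
  have hxst : xs - xt ≠ 0 := sub_ne_zero.mpr hx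
  have habs : 0 < |xs - xt| := abs_pos.mpr hxst
  have hP : (0:ℝ) < (ne : ℝ) * (nd : ℝ) := by
    have h1 : (1:ℝ) ≤ (ne : ℝ) := by exact_mod_cast hne
    have h2 : (1:ℝ) ≤ (nd : ℝ) := by exact_mod_cast hnd
    exact aux8 h1 h2
  have hsq : 0 < Real.sqrt ((ne : ℝ) * (nd : ℝ)) := Real.sqrt_pos.mpr hP
  have hT : 0 < (2*γ - 1) * Real.sqrt ((ne : ℝ) * (nd : ℝ)) * |xs - xt| := by positivity
  -- rewrite F1 and F2 in explicit closed form
  have hF1 : F1 = fun θ : ℝ × ℝ => (θ.1 - η * (θ.2 * Hf γ xs xt θ), θ.2) := by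
    funext θ
    have hder : deriv (fun a => d a θ.2) θ.1 = θ.2 * Hf γ xs xt (θ.1, θ.2) :=
      (hasDerivAt_dd_fst γ xs xt θ.1 θ.2).deriv
    show (θ.1 - η * deriv (fun a => d a θ.2) θ.1, θ.2)
        = (θ.1 - η * (θ.2 * Hf γ xs xt θ), θ.2)
    rw [hder]
  have hF2 : F2 = fun θ : ℝ × ℝ => (θ.1, θ.2 + η * (θ.1 * Hf γ xs xt θ)) := by
    funext θ
    have hder : deriv (fun b => d θ.1 b) θ.2 = θ.1 * Hf γ xs xt (θ.1, θ.2) :=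
      (hasDerivAt_dd_snd γ xs xt θ.1 θ.2).deriv
    show (θ.1, θ.2 + η * deriv (fun b => d θ.1 b) θ.2)
        = (θ.1, θ.2 + η * (θ.1 * Hf γ xs xt θ))
    rw [hder]
  have hfix1 : (fun θ : ℝ × ℝ => (θ.1 - η * (θ.2 * Hf γ xs xt θ), θ.2)) (0,0) = (0,0) := by
    simp
  have hfix2 : (fun θ : ℝ × ℝ => (θ.1, θ.2 + η * (θ.1 * Hf γ xs xt θ))) (0,0) = (0,0) := by
    simp
  have hfix1n : (fun θ : ℝ × ℝ => (θ.1 - η * (θ.2 * Hf γ xs xt θ), θ.2))^[ne] (0,0) = (0,0) :=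
    Function.iterate_fixed hfix1 ne
  have hfix2n : (fun θ : ℝ × ℝ => (θ.1, θ.2 + η * (θ.1 * Hf γ xs xt θ)))^[nd] (0,0) = (0,0) :=
    Function.iterate_fixed hfix2 nd
  have hFfix : F (0, 0) = (0, 0) := by
    show (F2^[nd]) ((F1^[ne]) (0,0)) = (0,0)
    rw [hF1, hF2, hfix1n, hfix2n]
  have h1n := it1 _ (-(η * Hf γ xs xt (0,0))) hfix1 (hG1 η γ xs xt) ne
  have h2n := it2 _ (η * Hf γ xs xt (0,0)) hfix2 (hG2 η γ xs xt) nd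
  have hFD : HasFDerivAt F
      ((Mm 1 0 ((nd:ℝ)*(η * Hf γ xs xt (0,0))) 1).comp
        (Mm 1 ((ne:ℝ)*(-(η * Hf γ xs xt (0,0)))) 0 1)) (0,0) := by
    have h2n' : HasFDerivAt
        ((fun θ : ℝ × ℝ => (θ.1, θ.2 + η * (θ.1 * Hf γ xs xt θ)))^[nd])
        (Mm 1 0 ((nd:ℝ)*(η * Hf γ xs xt (0,0))) 1)
        ((fun θ : ℝ × ℝ => (θ.1 - η * (θ.2 * Hf γ xs xt θ), θ.2))^[ne] (0,0)) := by
      rw [hfix1n]; exact h2n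
    have hc := HasFDerivAt.comp (0,0) h2n' h1n
    rw [← hF1, ← hF2] at hc
    exact hc
  have hH0 := Hf_zero γ xs xt
  -- J entries
  have hJ00 : J 0 0 = 1 := rfl
  have hJ01 : J 0 1 = -(η * (2 * γ - 1) * (ne : ℝ) * (xs - xt) / 2) := rfl
  have hJ10 : J 1 0 = η * (2 * γ - 1) * (nd : ℝ) * (xs - xt) / 2 := rfl
  have hJ11 : J 1 1 = 1 - η ^ 2 * (2 * γ - 1) ^ 2 * (ne : ℝ) * (nd : ℝ) * (xs - xt) ^ 2 / 4 := rfl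
  refine ⟨hFfix, ?_, ?_⟩
  · intro v
    rw [hFD.fderiv]
    rw [hJ00, hJ01, hJ10, hJ11]
    simp only [ContinuousLinearMap.comp_apply, Mm_apply]
    rw [hH0, Prod.mk.injEq]
    constructor <;> ring
  -- spectral part
  have hα : α = (2 * γ - 1) * η / 2 * Real.sqrt ((ne : ℝ) * (nd : ℝ)) * |xs - xt| := rfl
  have hαpos : 0 < α := by
    rw [hα]
    have h1 : 0 < (2*γ-1) * η / 2 := by positivity
    positivity
  have hsqsq : Real.sqrt ((ne : ℝ) * (nd : ℝ)) ^ 2 = (ne : ℝ) * (nd : ℝ) :=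
    Real.sq_sqrt hP.le
  have habssq : |xs - xt| ^ 2 = (xs - xt) ^ 2 := sq_abs _
  have hα2 : α ^ 2 = η ^ 2 * (2 * γ - 1) ^ 2 * (ne : ℝ) * (nd : ℝ) * (xs - xt) ^ 2 / 4 := by
    rw [hα]
    linear_combination ((2*γ-1)*η/2)^2 * |xs - xt|^2 * hsqsq
      + ((2*γ-1)*η/2)^2 * ((ne:ℝ)*(nd:ℝ)) * habssq
  set r : ℝ := (1 - α ^ 2 / 2) ^ 2 - 1 with hr
  set w : ℂ := if 0 ≤ r then ((Real.sqrt r : ℝ) : ℂ) else Complex.I * ((Real.sqrt (-r) : ℝ) : ℂ)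
    with hwdef
  have hw : w ^ 2 = ((1 - α ^ 2 / 2 : ℝ) : ℂ) ^ 2 - 1 := by
    have hrc : ((r : ℝ) : ℂ) = ((1 - α ^ 2 / 2 : ℝ) : ℂ) ^ 2 - 1 := by
      rw [hr]; push_cast; ring
    by_cases h0 : 0 ≤ r
    · rw [hwdef, if_pos h0, ← hrc]
      norm_cast
      exact Real.sq_sqrt h0
    · rw [hwdef, if_neg h0, ← hrc]
      have h0' : 0 ≤ -r := by linarith [lt_of_not_ge h0]
      have : ((Real.sqrt (-r) : ℝ) : ℂ) ^ 2 = ((-r : ℝ) : ℂ) := by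
        norm_cast; exact Real.sq_sqrt h0'
      rw [mul_pow, this, Complex.I_sq]
      push_cast; ring
  -- Jc entries
  have e00 : Jc 0 0 = ((1 : ℝ) : ℂ) := rfl
  have e01 : Jc 0 1 = ((-(η * (2 * γ - 1) * (ne : ℝ) * (xs - xt) / 2) : ℝ) : ℂ) := rfl
  have e10 : Jc 1 0 = ((η * (2 * γ - 1) * (nd : ℝ) * (xs - xt) / 2 : ℝ) : ℂ) := rfl
  have e11 : Jc 1 1 = ((1 - η ^ 2 * (2 * γ - 1) ^ 2 * (ne : ℝ) * (nd : ℝ) * (xs - xt) ^ 2 / 4 : ℝ) : ℂ) := rfl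
  have hα2c := congrArg (Complex.ofReal) hα2
  push_cast at hα2c
  have hw' := hw
  push_cast at hw'
  have hkey : ∀ μ : ℂ, (μ - Jc 0 0) * (μ - Jc 1 1) - Jc 0 1 * Jc 1 0
      = (μ - (((1 - α ^ 2 / 2 : ℝ) : ℂ) + w)) * (μ - (((1 - α ^ 2 / 2 : ℝ) : ℂ) - w)) := by
    intro μ
    rw [e00, e01, e10, e11]
    push_cast
    linear_combination hw' - μ * hα2c
  have hspec : spectrum ℂ Jc
      = {((1 - α ^ 2 / 2 : ℝ) : ℂ) + w, ((1 - α ^ 2 / 2 : ℝ) : ℂ) - w} := by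
    ext μ
    rw [spec_fin2, hkey μ, mul_eq_zero, sub_eq_zero, sub_eq_zero]
    simp [Set.mem_insert_iff]
  have hprod : (((1 - α ^ 2 / 2 : ℝ) : ℂ) + w) * (((1 - α ^ 2 / 2 : ℝ) : ℂ) - w) = 1 := by
    linear_combination -hw
  -- threshold equivalences
  set T : ℝ := (2 * γ - 1) * Real.sqrt ((ne : ℝ) * (nd : ℝ)) * |xs - xt| with hTdef
  have hαT : α = η * T / 2 := by rw [hα, hTdef]; ring
  have hηiff : (η ≤ 4 / T) ↔ α ≤ 2 := by
    rw [le_div_iff₀ hT, hαT]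
    constructor <;> intro h <;> linarith
  -- part 5 : eigenvalue of modulus > 1 when η is too big
  have part5 : ¬ η ≤ 4 / T → ∃ μ ∈ spectrum ℂ Jc, 1 < ‖μ‖ := by
    intro hgt
    have hα2gt : 2 < α := by
      by_contra hle
      exact hgt (hηiff.mpr (le_of_not_gt hle))
    have hβlt : 1 - α ^ 2 / 2 < -1 := aux1 hα2gt
    have hrpos : 0 < r := by rw [hr]; exact aux2 hβlt
    have hwr : w = ((Real.sqrt r : ℝ) : ℂ) := by rw [hwdef, if_pos hrpos.le]
    refine ⟨((1 - α ^ 2 / 2 : ℝ) : ℂ) - w, ?_, ?_⟩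
    · rw [hspec]; right; rfl
    · rw [hwr]
      have : ((1 - α ^ 2 / 2 : ℝ) : ℂ) - ((Real.sqrt r : ℝ) : ℂ)
          = (((1 - α ^ 2 / 2) - Real.sqrt r : ℝ) : ℂ) := by push_cast; ring
      rw [this, Complex.norm_real, Real.norm_eq_abs]
      have h1 : 0 ≤ Real.sqrt r := Real.sqrt_nonneg r
      have h2 : (1 - α ^ 2 / 2) - Real.sqrt r < -1 := by linarith
      rw [abs_of_neg (by linarith)]
      linarith
  refine ⟨⟨w, hw, hspec, hprod⟩, ?_, part5, ?_⟩
  · constructor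
    · intro hall
      by_contra hgt
      obtain ⟨μ, hmem, h1μ⟩ := part5 hgt
      have := hall μ hmem
      linarith
    · intro hle μ hmem
      have hα2le : α ≤ 2 := hηiff.mp hle
      have hβge : -1 ≤ 1 - α ^ 2 / 2 := aux3 hαpos hα2le
      have hβlt : 1 - α ^ 2 / 2 < 1 := aux4 hαpos
      have hrle : r ≤ 0 := by rw [hr]; exact aux5 hβge hβlt
      rw [hspec] at hmem
      have habs1 : ∀ z : ℂ, (z = ((1 - α ^ 2 / 2 : ℝ) : ℂ) + w ∨
          z = ((1 - α ^ 2 / 2 : ℝ) : ℂ) - w) → ‖z‖ = 1 := by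
        intro z hz
        by_cases h0 : 0 ≤ r
        · have hr0 : r = 0 := le_antisymm hrle h0
          have hw0 : w = 0 := by
            rw [hwdef, if_pos h0, hr0]; simp
          have hβ1 : (1 - α ^ 2 / 2) = -1 := by
            have h2 : (1 - α ^ 2 / 2) ^ 2 = 1 := by rw [hr] at hr0; linarith
            exact aux6 hβlt h2
          rcases hz with hz | hz <;> rw [hz, hw0] <;> simp [hβ1]
        · have hrneg : r < 0 := lt_of_not_ge h0
          have hwI : w = Complex.I * ((Real.sqrt (-r) : ℝ) : ℂ) := by
            rw [hwdef, if_neg h0]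
          have hs2 : Real.sqrt (-r) ^ 2 = -r := Real.sq_sqrt (by linarith)
          have hkey2 : ∀ s : ℝ, ‖((1 - α ^ 2 / 2 : ℝ) : ℂ) + (s : ℂ) * Complex.I‖
              = Real.sqrt ((1 - α ^ 2 / 2) ^ 2 + s ^ 2) := by
            intro s
            rw [Complex.norm_add_mul_I]
          rcases hz with hz | hz
          · rw [hz, hwI]
            have : ((1 - α ^ 2 / 2 : ℝ) : ℂ) + Complex.I * ((Real.sqrt (-r) : ℝ) : ℂ)
                = ((1 - α ^ 2 / 2 : ℝ) : ℂ) + ((Real.sqrt (-r) : ℝ) : ℂ) * Complex.I := by ring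
            rw [this, hkey2]
            rw [hs2, hr]
            rw [show (1 - α ^ 2 / 2) ^ 2 + -((1 - α ^ 2 / 2) ^ 2 - 1) = 1 by ring]
            exact Real.sqrt_one
          · rw [hz, hwI]
            have : ((1 - α ^ 2 / 2 : ℝ) : ℂ) - Complex.I * ((Real.sqrt (-r) : ℝ) : ℂ)
                = ((1 - α ^ 2 / 2 : ℝ) : ℂ) + ((-Real.sqrt (-r) : ℝ) : ℂ) * Complex.I := by
              push_cast; ring
            rw [this, hkey2]
            rw [show (-Real.sqrt (-r)) ^ 2 = Real.sqrt (-r) ^ 2 by ring, hs2, hr]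
            rw [show (1 - α ^ 2 / 2) ^ 2 + -((1 - α ^ 2 / 2) ^ 2 - 1) = 1 by ring]
            exact Real.sqrt_one
      exact habs1 μ hmem
  · have hle : (2 * γ - 1) * Real.sqrt ((ne : ℝ) * (nd : ℝ)) * |xs - xt|
        ≤ Real.sqrt ((ne : ℝ) * (nd : ℝ)) * |xs - xt| :=
      aux7 h2γle hsq.le habs.le
    exact div_le_div_of_nonneg_left (by norm_num) hT hle
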